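/- arXiv:1707.00304 — 3 statements merged into one kernel-verified Lean document; each statement's English description precedes it below -/
import Mathlib

section
/- Proposition 2 (MMF-DoF of degraded beamforming): Suppose N ≥ 1, M ≥ 1, σ² > 0, and h_k ≠ 0 for every user k. Then lim_{P→∞} ℛ̃(P)/log₂(P) = 1/M. -/
open scoped BigOperators

noncomputable section

/-- `hᴴ p`. -/
def hinner {N : ℕ} (h p : Fin N → ℂ) : ℂ := ∑ i, star (h i) * p i

/-- Transmit power of a beamformer. -/
def bpow {N : ℕ} (p : Fin N → ℂ) : ℝ := ∑ i, ‖p i‖ ^ 2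

/-- Generic rank assumption. -/
def GenericRank {N K : ℕ} (h : Fin K → Fin N → ℂ) : Prop :=
  ∀ S : Finset (Fin K),
    (Matrix.of fun (i : Fin N) (k : S) => h k.1 i).rank = min N S.card

/-- Size of group `m` (groups indexed from `0`). -/
def Gsize {K M : ℕ} (μ : Fin K → Fin M) (m : ℕ) : ℕ :=
  (Finset.univ.filter fun k => (μ k : ℕ) = m).card

/-- `N_L = 1 + Σ_{m=2}^{L} G_m` (`1`-indexed), i.e. `1 + Σ_{m=1}^{L-1} G_m` with our
`0`-indexed groups. -/
def NL {K M : ℕ} (μ : Fin K → Fin M) (L : ℕ) : ℕ :=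
  1 + ∑ m ∈ Finset.Ico 1 L, Gsize μ m

/-- Rate of user `k` under classical (designated) beamforming `p`. -/
def userRate {N K M : ℕ} (h : Fin K → Fin N → ℂ) (μ : Fin K → Fin M)
    (σ2 : ℝ) (p : Fin M → Fin N → ℂ) (k : Fin K) : ℝ :=
  Real.logb 2 (1 + ‖hinner (h k) (p (μ k))‖ ^ 2 /
    ((∑ m ∈ Finset.univ.erase (μ k), ‖hinner (h k) (p m)‖ ^ 2) + σ2))

/-- Rate of the `π(m)`-th stream at user `k` under degraded beamforming with decoding
order `π`: streams `π(1),…,π(m-1)` have already been decoded and cancelled, and streams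
`π(j)`, `j > m`, are treated as noise. -/
def degRate {N K M : ℕ} (h : Fin K → Fin N → ℂ) (σ2 : ℝ)
    (π : Equiv.Perm (Fin M)) (p : Fin M → Fin N → ℂ) (k : Fin K) (m : Fin M) : ℝ :=
  Real.logb 2 (1 + ‖hinner (h k) (p (π m))‖ ^ 2 /
    ((∑ j ∈ Finset.univ.filter (fun j => m < j), ‖hinner (h k) (p (π j))‖ ^ 2) + σ2))

/-- Max-min fair value of degraded beamforming: the supremum over decoding orders `π` and
feasible beamformers of the minimum over `m` of the `π(m)`-th group rate, the latter being
the minimum of `R̃_i^{π(m)}` over all users `i` in groups `π(m), π(m+1), …, π(M)`. -/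
def MMFdegraded {N K M : ℕ} (h : Fin K → Fin N → ℂ) (μ : Fin K → Fin M)
    (σ2 : ℝ) (P : ℝ) : ℝ :=
  sSup { r : ℝ | ∃ (π : Equiv.Perm (Fin M)) (p : Fin M → Fin N → ℂ),
    (∑ m, bpow (p m)) ≤ P ∧
    r = ⨅ m : Fin M, ⨅ i : {i : Fin K // m ≤ π.symm (μ i)}, degRate h σ2 π p i.1 m }

lemma bpow_nonneg {N : ℕ} (p : Fin N → ℂ) : 0 ≤ bpow p :=
  Finset.sum_nonneg fun _ _ => by positivity

lemma hinner_smul {N : ℕ} (h v : Fin N → ℂ) (c : ℂ) :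
    hinner h (c • v) = c * hinner h v := by
  simp only [hinner, Pi.smul_apply, smul_eq_mul, Finset.mul_sum]
  exact Finset.sum_congr rfl fun i _ => by ring

lemma bpow_smul {N : ℕ} (v : Fin N → ℂ) (c : ℂ) :
    bpow (c • v) = ‖c‖ ^ 2 * bpow v := by
  simp only [bpow, Pi.smul_apply, smul_eq_mul, norm_mul, mul_pow, Finset.mul_sum]

lemma hinner_cauchy {N : ℕ} (h p : Fin N → ℂ) :
    ‖hinner h p‖ ^ 2 ≤ bpow h * bpow p := by
  set x : EuclideanSpace ℂ (Fin N) := (EuclideanSpace.equiv (Fin N) ℂ).symm h with hxdef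
  set y : EuclideanSpace ℂ (Fin N) := (EuclideanSpace.equiv (Fin N) ℂ).symm p with hydef
  have hx : hinner h p = inner (𝕜 := ℂ) x y := by
    simp [hinner, PiLp.inner_apply, RCLike.inner_apply]
    exact Finset.sum_congr rfl fun i _ => mul_comm _ _
  have hcs : ‖inner (𝕜 := ℂ) x y‖ ≤ ‖x‖ * ‖y‖ := norm_inner_le_norm x y
  have hnx : ‖x‖ ^ 2 = bpow h := by
    rw [EuclideanSpace.norm_eq, Real.sq_sqrt (Finset.sum_nonneg fun _ _ => by positivity)]
    rfl
  have hny : ‖y‖ ^ 2 = bpow p := by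
    rw [EuclideanSpace.norm_eq, Real.sq_sqrt (Finset.sum_nonneg fun _ _ => by positivity)]
    rfl
  rw [hx, ← hnx, ← hny, ← mul_pow]
  have h0 : (0:ℝ) ≤ ‖x‖ * ‖y‖ := by positivity
  exact pow_le_pow_left₀ (norm_nonneg _) hcs 2

lemma hinner_self {N : ℕ} (h : Fin N → ℂ) : hinner h h = (bpow h : ℝ) := by
  simp only [hinner, bpow]
  push_cast
  refine Finset.sum_congr rfl fun i _ => ?_
  rw [Complex.star_def, RCLike.conj_mul]
  norm_cast

lemma bpow_pos {N : ℕ} {h : Fin N → ℂ} (hh : h ≠ 0) : 0 < bpow h := by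
  rcases (bpow_nonneg h).lt_or_eq with hlt | heq
  · exact hlt
  · exfalso; apply hh
    funext i
    have := (Finset.sum_eq_zero_iff_of_nonneg (fun j _ => by positivity)).1 heq.symm i
      (Finset.mem_univ i)
    have : ‖h i‖ = 0 := by nlinarith [norm_nonneg (h i)]
    simpa using this

lemma exists_good_v {N K : ℕ} (h : Fin K → Fin N → ℂ) (hK : Nonempty (Fin K))
    (hch : ∀ k, h k ≠ 0) :
    ∃ v : Fin N → ℂ, bpow v = 1 ∧ ∀ k, hinner (h k) v ≠ 0 := by
  -- linear functional v ↦ hinner (h k) v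
  have hlin : ∀ k : Fin K, ∃ f : (Fin N → ℂ) →ₗ[ℂ] ℂ, ∀ w, f w = hinner (h k) w := by
    intro k
    refine ⟨{ toFun := fun w => hinner (h k) w, map_add' := ?_, map_smul' := ?_ }, fun w => rfl⟩
    · intro a b; simp only [hinner, Pi.add_apply, mul_add, Finset.sum_add_distrib]
    · intro c a; simp [hinner_smul]
  choose f hf using hlin
  have hker : ∀ k, LinearMap.ker (f k) ≠ ⊤ := by
    intro k hk
    have : f k (h k) = 0 := by
      have : h k ∈ LinearMap.ker (f k) := hk ▸ Submodule.mem_top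
      simpa using this
    rw [hf, hinner_self] at this
    exact absurd (by exact_mod_cast this) (ne_of_gt (bpow_pos (hch k)))
  have hcover : (⋃ k, ((LinearMap.ker (f k) : Submodule ℂ (Fin N → ℂ)) : Set (Fin N → ℂ)))
      ≠ Set.univ := by
    intro hc
    obtain ⟨k, hk⟩ := Subspace.exists_eq_top_of_iUnion_eq_univ hc
    exact hker k hk
  obtain ⟨w, hw⟩ := Set.ne_univ_iff_exists_notMem _ |>.1 hcover
  have hwne : ∀ k, hinner (h k) w ≠ 0 := by
    intro k hk0
    exact hw (Set.mem_iUnion.2 ⟨k, by simpa [LinearMap.mem_ker, hf] using hk0⟩)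
  -- normalize
  have hw0 : w ≠ 0 := by
    intro h0
    obtain ⟨k⟩ := hK
    apply hwne k
    simp [h0, hinner]
  have hb : 0 < bpow w := bpow_pos hw0
  refine ⟨((Real.sqrt (bpow w))⁻¹ : ℝ) • w, ?_, ?_⟩
  · rw [show (((Real.sqrt (bpow w))⁻¹ : ℝ) • w : Fin N → ℂ)
        = (((Real.sqrt (bpow w))⁻¹ : ℝ) : ℂ) • w by
      funext i; simp [Complex.real_smul]]
    rw [bpow_smul]
    rw [Complex.norm_real]
    rw [Real.norm_eq_abs, abs_of_nonneg (by positivity), inv_pow, Real.sq_sqrt hb.le]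
    field_simp
  · intro k
    rw [show (((Real.sqrt (bpow w))⁻¹ : ℝ) • w : Fin N → ℂ)
        = (((Real.sqrt (bpow w))⁻¹ : ℝ) : ℂ) • w by
      funext i; simp [Complex.real_smul]]
    rw [hinner_smul]
    refine mul_ne_zero ?_ (hwne k)
    simp only [ne_eq, Complex.ofReal_eq_zero, inv_eq_zero]
    positivity

lemma telescope_sum {M : ℕ} (s : Fin M → ℝ) (hs : ∀ j, 0 ≤ s j) {σ2 : ℝ} (hσ : 0 < σ2) :
    ∑ m : Fin M, Real.logb 2
        (1 + s m / ((∑ j ∈ Finset.univ.filter (fun j => m < j), s j) + σ2))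
      = Real.logb 2 (((∑ j, s j) + σ2) / σ2) := by
  set F : ℕ → ℝ := fun n => (∑ j ∈ Finset.univ.filter (fun j : Fin M => n ≤ (j : ℕ)), s j) + σ2
    with hFdef
  have hFpos : ∀ n, 0 < F n := fun n =>
    add_pos_of_nonneg_of_pos (Finset.sum_nonneg fun j _ => hs j) hσ
  have hFM : F M = σ2 := by
    have : Finset.univ.filter (fun j : Fin M => M ≤ (j : ℕ)) = ∅ := by
      apply Finset.filter_false_of_mem
      intro j _
      exact Nat.not_le.2 j.2
    simp only [hFdef, this, Finset.sum_empty, zero_add]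
  have hF0 : F 0 = (∑ j, s j) + σ2 := by
    simp [hFdef]
  have hstep : ∀ m : Fin M, F m.1 = s m + (F (m.1 + 1)) := by
    intro m
    have hsplit : Finset.univ.filter (fun j : Fin M => m.1 ≤ (j : ℕ))
        = insert m (Finset.univ.filter (fun j : Fin M => m.1 + 1 ≤ (j : ℕ))) := by
      ext j
      simp only [Finset.mem_filter, Finset.mem_univ, true_and, Finset.mem_insert]
      constructor
      · intro hj
        rcases Nat.eq_or_lt_of_le hj with he | hl
        · left; exact (Fin.ext he.symm : j = m).symm ▸ rfl
        · right; omega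
      · rintro (rfl | hj) <;> omega
    have hnot : m ∉ Finset.univ.filter (fun j : Fin M => m.1 + 1 ≤ (j : ℕ)) := by
      simp
    simp only [hFdef, hsplit, Finset.sum_insert hnot]
    ring
  have hterm : ∀ m : Fin M,
      Real.logb 2 (1 + s m / ((∑ j ∈ Finset.univ.filter (fun j => m < j), s j) + σ2))
        = Real.logb 2 (F m.1) - Real.logb 2 (F (m.1 + 1)) := by
    intro m
    have hfe : Finset.univ.filter (fun j : Fin M => m < j)
        = Finset.univ.filter (fun j : Fin M => m.1 + 1 ≤ (j : ℕ)) := by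
      apply Finset.filter_congr
      intro j _
      exact Iff.rfl
    have hden : (∑ j ∈ Finset.univ.filter (fun j => m < j), s j) + σ2 = F (m.1 + 1) := by
      rw [hfe]
    rw [hden]
    have : 1 + s m / F (m.1 + 1) = F m.1 / F (m.1 + 1) := by
      rw [hstep m, add_div, div_self (hFpos (m.1 + 1)).ne']
      ring
    rw [this, Real.logb_div (hFpos _).ne' (hFpos _).ne']
  calc ∑ m : Fin M, Real.logb 2
        (1 + s m / ((∑ j ∈ Finset.univ.filter (fun j => m < j), s j) + σ2))
      = ∑ m : Fin M, (Real.logb 2 (F m.1) - Real.logb 2 (F (m.1 + 1))) :=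
        Finset.sum_congr rfl fun m _ => hterm m
    _ = ∑ i ∈ Finset.range M, (Real.logb 2 (F i) - Real.logb 2 (F (i + 1))) := by
        exact Fin.sum_univ_eq_sum_range (fun i => Real.logb 2 (F i) - Real.logb 2 (F (i+1))) M
    _ = Real.logb 2 (F 0) - Real.logb 2 (F M) := Finset.sum_range_sub' _ _
    _ = Real.logb 2 (((∑ j, s j) + σ2) / σ2) := by
        rw [hF0, hFM, Real.logb_div
          (add_pos_of_nonneg_of_pos (Finset.sum_nonneg fun j _ => hs j) hσ).ne' hσ.ne']

open Filter in
lemma aux_tendsto {c t : ℝ} (hc : 0 < c) (ht : 0 < t) :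
    Filter.Tendsto (fun P : ℝ => Real.logb 2 (1 + c * P ^ t) / Real.logb 2 P)
      Filter.atTop (nhds t) := by
  have h1 : Tendsto (fun P : ℝ => Real.log (P ^ (-t) + c)) atTop (nhds (Real.log c)) := by
    have := (tendsto_rpow_neg_atTop ht).add_const c
    rw [zero_add] at this
    exact ((Real.continuousAt_log hc.ne').tendsto).comp this
  have h2 : Tendsto (fun P : ℝ => Real.log (P ^ (-t) + c) / Real.log P) atTop (nhds 0) :=
    Tendsto.div_atTop h1 Real.tendsto_log_atTop
  have h3 : Tendsto (fun P : ℝ => t + Real.log (P ^ (-t) + c) / Real.log P) atTop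
      (nhds t) := by
    have := tendsto_const_nhds (x := t) (f := atTop (α := ℝ)) |>.add h2
    simpa using this
  apply h3.congr'
  filter_upwards [eventually_gt_atTop 1] with P hP
  have hP0 : (0:ℝ) < P := lt_trans one_pos hP
  have hlogP : 0 < Real.log P := Real.log_pos hP
  have hpt : (0:ℝ) < P ^ t := Real.rpow_pos_of_pos hP0 t
  have hptn : (0:ℝ) < P ^ (-t) + c := by positivity
  have hfact : 1 + c * P ^ t = P ^ t * (P ^ (-t) + c) := by
    rw [mul_add, ← Real.rpow_add hP0]
    simp [Real.rpow_zero]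
    ring
  have hlog : Real.log (1 + c * P ^ t) = t * Real.log P + Real.log (P ^ (-t) + c) := by
    rw [hfact, Real.log_mul hpt.ne' hptn.ne', Real.log_rpow hP0]
  have hlogb : Real.logb 2 (1 + c * P ^ t) / Real.logb 2 P
      = Real.log (1 + c * P ^ t) / Real.log P := by
    unfold Real.logb
    rw [div_div_div_cancel_right₀]
    exact (Real.log_pos one_lt_two).ne'
  rw [eq_comm, hlogb, hlog, add_div, mul_div_assoc, div_self hlogP.ne', mul_one]


set_option maxHeartbeats 2000000 in
open Filter in
/-- **Proposition 2 (MMF-DoF of degraded beamforming).** With `N ≥ 1` antennas, `M ≥ 1`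
(nonempty) groups, noise variance `σ² > 0` and nonzero user channels,
`ℛ̃(P)/log₂ P → 1/M` as `P → ∞`. -/
theorem stmt1 {N K M : ℕ} (hN : 1 ≤ N) (hM : 1 ≤ M)
    (h : Fin K → Fin N → ℂ) (μ : Fin K → Fin M) (hsurj : Function.Surjective μ)
    (hch : ∀ k : Fin K, h k ≠ 0)
    (σ2 : ℝ) (hσ : 0 < σ2) :
    Filter.Tendsto (fun P : ℝ => MMFdegraded h μ σ2 P / Real.logb 2 P)
      Filter.atTop (nhds (1 / (M : ℝ))) := by
  haveI hMne : Nonempty (Fin M) := ⟨⟨0, hM⟩⟩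
  haveI hKne : Nonempty (Fin K) := ⟨(hsurj ⟨0, hM⟩).choose⟩
  have hMpos : (0:ℝ) < (M:ℝ) := by exact_mod_cast hM
  set S : ℝ → Set ℝ := fun P => { r : ℝ | ∃ (π : Equiv.Perm (Fin M)) (p : Fin M → Fin N → ℂ),
    (∑ m, bpow (p m)) ≤ P ∧
    r = ⨅ m : Fin M, ⨅ i : {i : Fin K // m ≤ π.symm (μ i)}, degRate h σ2 π p i.1 m }
    with hSdef
  have hMMF : ∀ P, MMFdegraded h μ σ2 P = sSup (S P) := fun P => rfl
  set C : ℝ := ∑ k, bpow (h k) with hCdef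
  have hC : 0 < C := Finset.sum_pos (fun k _ => bpow_pos (hch k)) Finset.univ_nonempty
  have hCk : ∀ k, bpow (h k) ≤ C := fun k =>
    Finset.single_le_sum (fun j _ => bpow_nonneg _) (Finset.mem_univ k)
  set mtop : Fin M := ⟨M - 1, by omega⟩ with hmtopdef
  have hmtop : ∀ m : Fin M, m ≤ mtop := by
    intro m
    rw [Fin.le_def]
    have := m.2
    simp only [hmtopdef]
    omega
  -- upper bound
  have hub : ∀ P : ℝ, 0 ≤ P → ∀ r ∈ S P,
      r ≤ (M:ℝ)⁻¹ * Real.logb 2 (1 + C * P / σ2) := by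
    intro P hP r hr
    obtain ⟨π, p, hpow, hreq⟩ := hr
    obtain ⟨k, hk⟩ := hsurj (π mtop)
    have hik : ∀ m : Fin M, m ≤ π.symm (μ k) := by
      intro m
      rw [hk, Equiv.symm_apply_apply]
      exact hmtop m
    set s : Fin M → ℝ := fun j => ‖hinner (h k) (p (π j))‖ ^ 2 with hsdef
    have hsnn : ∀ j, 0 ≤ s j := fun j => by positivity
    have hrle : ∀ m : Fin M, r ≤ degRate h σ2 π p k m := by
      intro m
      rw [hreq]
      refine le_trans (ciInf_le (Finite.bddBelow_range _) m) ?_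
      exact ciInf_le (Finite.bddBelow_range _) (⟨k, hik m⟩ : {i : Fin K // m ≤ π.symm (μ i)})
    have hsum : ∑ m : Fin M, degRate h σ2 π p k m
        = Real.logb 2 (((∑ j, s j) + σ2) / σ2) := telescope_sum s hsnn hσ
    have hsle : (∑ j, s j) ≤ C * P := by
      calc (∑ j, s j) ≤ ∑ j, C * bpow (p (π j)) := by
            refine Finset.sum_le_sum fun j _ => ?_
            refine le_trans (hinner_cauchy (h k) (p (π j))) ?_
            exact mul_le_mul_of_nonneg_right (hCk k) (bpow_nonneg _)
        _ = C * ∑ j, bpow (p (π j)) := by rw [Finset.mul_sum]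
        _ = C * ∑ m, bpow (p m) := by rw [Equiv.sum_comp π (fun m => bpow (p m))]
        _ ≤ C * P := mul_le_mul_of_nonneg_left hpow hC.le
    have h4 : Real.logb 2 (((∑ j, s j) + σ2) / σ2) ≤ Real.logb 2 (1 + C * P / σ2) := by
      apply Real.logb_le_logb_of_le one_lt_two
      · positivity
      · rw [add_div, div_self hσ.ne']
        rw [add_comm]
        gcongr
    have hMr : (M:ℝ) * r ≤ Real.logb 2 (1 + C * P / σ2) := by
      calc (M:ℝ) * r = ∑ _m : Fin M, r := by
            rw [Finset.sum_const, Finset.card_univ, Fintype.card_fin, nsmul_eq_mul]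
        _ ≤ ∑ m : Fin M, degRate h σ2 π p k m := Finset.sum_le_sum fun m _ => hrle m
        _ = Real.logb 2 (((∑ j, s j) + σ2) / σ2) := hsum
        _ ≤ Real.logb 2 (1 + C * P / σ2) := h4
    calc r = (M:ℝ)⁻¹ * ((M:ℝ) * r) := by field_simp
      _ ≤ (M:ℝ)⁻¹ * Real.logb 2 (1 + C * P / σ2) :=
          mul_le_mul_of_nonneg_left hMr (by positivity)
  have hbdd : ∀ P : ℝ, 0 ≤ P → BddAbove (S P) := fun P hP =>
    ⟨_, fun r hr => hub P hP r hr⟩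
  have hsup_le : ∀ P : ℝ, 0 ≤ P →
      MMFdegraded h μ σ2 P ≤ (M:ℝ)⁻¹ * Real.logb 2 (1 + C * P / σ2) := by
    intro P hP
    rw [hMMF]
    refine Real.sSup_le (fun r hr => hub P hP r hr) ?_
    have : (0:ℝ) ≤ Real.logb 2 (1 + C * P / σ2) :=
      Real.logb_nonneg one_lt_two (by nlinarith [mul_nonneg hC.le hP, div_nonneg (mul_nonneg hC.le hP) hσ.le])
    positivity
  -- lower bound
  obtain ⟨v, hv1, hvnz⟩ := exists_good_v h hKne hch
  set a : ℝ := Finset.univ.inf' Finset.univ_nonempty (fun k => ‖hinner (h k) v‖ ^ 2) with hadef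
  have hak : ∀ k, a ≤ ‖hinner (h k) v‖ ^ 2 := fun k =>
    Finset.inf'_le _ (Finset.mem_univ k)
  have ha : 0 < a := by
    rw [hadef, Finset.lt_inf'_iff]
    exact fun k _ => pow_pos (norm_pos_iff.2 (hvnz k)) 2
  set c : ℝ := a / ((M:ℝ) * (a + σ2)) with hcdef
  have hc : 0 < c := div_pos ha (by positivity)
  have hlow : ∀ P : ℝ, 1 ≤ P →
      Real.logb 2 (1 + c * P ^ ((M:ℝ)⁻¹)) ≤ MMFdegraded h μ σ2 P := by
    intro P hP1
    have hP0 : (0:ℝ) < P := lt_of_lt_of_le one_pos hP1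
    set q : Fin M → ℝ := fun m => (P / (M:ℝ)) * P ^ (-((m:ℕ):ℝ)/(M:ℝ)) with hqdef
    have hq0 : ∀ m, 0 < q m := fun m => by
      simp only [hqdef]
      have := Real.rpow_pos_of_pos hP0 (-((m:ℕ):ℝ)/(M:ℝ))
      positivity
    set p : Fin M → Fin N → ℂ := fun m => ((Real.sqrt (q m) : ℝ) : ℂ) • v with hpdef
    have hbp : ∀ m, bpow (p m) = q m := by
      intro m
      simp only [hpdef]
      rw [bpow_smul, hv1, mul_one, Complex.norm_real, Real.norm_eq_abs,
        abs_of_nonneg (Real.sqrt_nonneg _), Real.sq_sqrt (hq0 m).le]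
    have hqle : ∀ m, q m ≤ P / (M:ℝ) := by
      intro m
      simp only [hqdef]
      nth_rewrite 2 [← mul_one (P / (M:ℝ))]
      refine mul_le_mul_of_nonneg_left ?_ (by positivity)
      refine Real.rpow_le_one_of_one_le_of_nonpos hP1 ?_
      apply div_nonpos_of_nonpos_of_nonneg <;> simp [hMpos.le]
    have hpow : ∑ m, bpow (p m) ≤ P := by
      calc ∑ m, bpow (p m) = ∑ m, q m := Finset.sum_congr rfl fun m _ => hbp m
        _ ≤ ∑ _m : Fin M, P / (M:ℝ) := Finset.sum_le_sum fun m _ => hqle m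
        _ = (M:ℝ) * (P / (M:ℝ)) := by
            rw [Finset.sum_const, Finset.card_univ, Fintype.card_fin, nsmul_eq_mul]
        _ = P := by field_simp
    have hnum : ∀ (k : Fin K) (m : Fin M),
        ‖hinner (h k) (p m)‖ ^ 2 = q m * ‖hinner (h k) v‖ ^ 2 := by
      intro k m
      simp only [hpdef]
      rw [hinner_smul, norm_mul, mul_pow, Complex.norm_real, Real.norm_eq_abs,
        abs_of_nonneg (Real.sqrt_nonneg _), Real.sq_sqrt (hq0 m).le]
    -- key SINR bound
    have hsinr : ∀ (k : Fin K) (m : Fin M),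
        Real.logb 2 (1 + c * P ^ ((M:ℝ)⁻¹)) ≤ degRate h σ2 1 p k m := by
      intro k m
      set ak : ℝ := ‖hinner (h k) v‖ ^ 2 with hakdef
      have hakpos : 0 < ak := pow_pos (norm_pos_iff.2 (hvnz k)) 2
      set Ssum : ℝ := ∑ j ∈ Finset.univ.filter (fun j => m < j), q j with hSsumdef
      set X : ℝ := P ^ (1 - (((m:ℕ):ℝ) + 1)/(M:ℝ)) with hXdef
      have hm1M : ((m:ℕ):ℝ) + 1 ≤ (M:ℝ) := by exact_mod_cast m.2
      have hX1 : 1 ≤ X := by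
        refine Real.one_le_rpow hP1 ?_
        rw [sub_nonneg, div_le_one hMpos]
        exact hm1M
      have hXpos : 0 < X := lt_of_lt_of_le one_pos hX1
      have hSX : Ssum ≤ X := by
        have hcardle : (Finset.univ.filter (fun j : Fin M => m < j)).card ≤ M := by
          refine le_trans (Finset.card_le_card (Finset.filter_subset _ _)) ?_
          simp
        calc Ssum ≤ ∑ _j ∈ Finset.univ.filter (fun j : Fin M => m < j),
              (P / (M:ℝ)) * P ^ (-(((m:ℕ):ℝ) + 1)/(M:ℝ)) := by
              refine Finset.sum_le_sum fun j hj => ?_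
              simp only [hqdef]
              refine mul_le_mul_of_nonneg_left ?_ (by positivity)
              refine Real.rpow_le_rpow_of_exponent_le hP1 ?_
              have hj' : (m:ℕ) + 1 ≤ (j:ℕ) := (Finset.mem_filter.1 hj).2
              have hj2 : (((m:ℕ):ℝ) + 1) ≤ ((j:ℕ):ℝ) := by exact_mod_cast hj'
              rw [div_le_div_iff₀ hMpos hMpos]
              nlinarith
            _ = ((Finset.univ.filter (fun j : Fin M => m < j)).card : ℝ) *
                ((P / (M:ℝ)) * P ^ (-(((m:ℕ):ℝ) + 1)/(M:ℝ))) := by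
              rw [Finset.sum_const, nsmul_eq_mul]
            _ ≤ (M:ℝ) * ((P / (M:ℝ)) * P ^ (-(((m:ℕ):ℝ) + 1)/(M:ℝ))) := by
              refine mul_le_mul_of_nonneg_right ?_ (by positivity)
              exact_mod_cast hcardle
            _ = X := by
              rw [hXdef]
              rw [show (1 - (((m:ℕ):ℝ) + 1)/(M:ℝ)) = 1 + (-(((m:ℕ):ℝ) + 1)/(M:ℝ)) by ring]
              rw [Real.rpow_add hP0, Real.rpow_one]
              field_simp
      have hqm : q m = (M:ℝ)⁻¹ * (P ^ ((M:ℝ)⁻¹) * X) := by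
        simp only [hqdef, hXdef]
        rw [← Real.rpow_add hP0]
        rw [show ((M:ℝ)⁻¹ + (1 - (((m:ℕ):ℝ) + 1)/(M:ℝ))) = 1 + (-((m:ℕ):ℝ)/(M:ℝ)) by
          field_simp; ring]
        rw [Real.rpow_add hP0, Real.rpow_one]
        field_simp
      -- reduce degRate
      have hperm : ∀ j : Fin M, (1 : Equiv.Perm (Fin M)) j = j := fun j => rfl
      have hI : (∑ j ∈ Finset.univ.filter (fun j => m < j),
          ‖hinner (h k) (p ((1 : Equiv.Perm (Fin M)) j))‖ ^ 2) = Ssum * ak := by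
        rw [hSsumdef, Finset.sum_mul]
        exact Finset.sum_congr rfl fun j _ => by rw [hperm, hnum]
      have hfrac : a / (a + σ2) ≤ ak / (ak + σ2) := by
        rw [div_le_div_iff₀ (by positivity) (by positivity)]
        nlinarith [hak k]
      have hden : Ssum * ak + σ2 ≤ (ak + σ2) * X := by
        have h1 : Ssum * ak ≤ X * ak := mul_le_mul_of_nonneg_right hSX hakpos.le
        have h2 : σ2 * 1 ≤ σ2 * X := mul_le_mul_of_nonneg_left hX1 hσ.le
        nlinarith
      have hSnn : 0 ≤ Ssum := Finset.sum_nonneg fun j _ => (hq0 j).le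
      have heq : (q m * ak) / ((ak + σ2) * X)
          = (ak / (ak + σ2)) * ((M:ℝ)⁻¹ * P ^ ((M:ℝ)⁻¹)) := by
        rw [hqm]
        field_simp
      have hchain : c * P ^ ((M:ℝ)⁻¹) ≤ q m * ak / (Ssum * ak + σ2) := by
        have e1 : c * P ^ ((M:ℝ)⁻¹) = (a / (a + σ2)) * ((M:ℝ)⁻¹ * P ^ ((M:ℝ)⁻¹)) := by
          rw [hcdef]
          field_simp
        have e2 : (a / (a + σ2)) * ((M:ℝ)⁻¹ * P ^ ((M:ℝ)⁻¹))
            ≤ (ak / (ak + σ2)) * ((M:ℝ)⁻¹ * P ^ ((M:ℝ)⁻¹)) := by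
          refine mul_le_mul_of_nonneg_right hfrac ?_
          have := Real.rpow_pos_of_pos hP0 ((M:ℝ)⁻¹)
          positivity
        have e3 : (q m * ak) / ((ak + σ2) * X) ≤ q m * ak / (Ssum * ak + σ2) :=
          div_le_div_of_nonneg_left (by positivity) (by positivity) hden
        calc c * P ^ ((M:ℝ)⁻¹)
            = (a / (a + σ2)) * ((M:ℝ)⁻¹ * P ^ ((M:ℝ)⁻¹)) := e1
          _ ≤ (ak / (ak + σ2)) * ((M:ℝ)⁻¹ * P ^ ((M:ℝ)⁻¹)) := e2
          _ = (q m * ak) / ((ak + σ2) * X) := heq.symm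
          _ ≤ q m * ak / (Ssum * ak + σ2) := e3
      unfold degRate
      rw [hperm, hnum, hI]
      refine Real.logb_le_logb_of_le one_lt_two ?_ ?_
      · have := Real.rpow_pos_of_pos hP0 ((M:ℝ)⁻¹)
        positivity
      · exact (add_le_add_iff_left 1).2 hchain
    -- assemble
    have hmem : (⨅ m : Fin M, ⨅ i : {i : Fin K //
        m ≤ (1 : Equiv.Perm (Fin M)).symm (μ i)}, degRate h σ2 1 p i.1 m) ∈ S P :=
      ⟨1, p, hpow, rfl⟩
    have hrge : Real.logb 2 (1 + c * P ^ ((M:ℝ)⁻¹))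
        ≤ ⨅ m : Fin M, ⨅ i : {i : Fin K //
          m ≤ (1 : Equiv.Perm (Fin M)).symm (μ i)}, degRate h σ2 1 p i.1 m := by
      refine le_ciInf fun m => ?_
      haveI : Nonempty {i : Fin K // m ≤ (1 : Equiv.Perm (Fin M)).symm (μ i)} := by
        obtain ⟨k0, hk0⟩ := hsurj mtop
        refine ⟨⟨k0, ?_⟩⟩
        have he : (1 : Equiv.Perm (Fin M)).symm (μ k0) = μ k0 := rfl
        rw [he, hk0]
        exact hmtop m
      exact le_ciInf fun i => hsinr i.1 m
    rw [hMMF]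
    exact le_trans hrge (le_csSup (hbdd P (by linarith)) hmem)
  -- final squeeze
  have hc' : (0:ℝ) < C / σ2 := div_pos hC hσ
  have hUP : Tendsto (fun P : ℝ =>
      ((M:ℝ)⁻¹ * Real.logb 2 (1 + C * P / σ2)) / Real.logb 2 P) atTop (nhds (1/(M:ℝ))) := by
    have h0 := (aux_tendsto hc' one_pos).const_mul ((M:ℝ)⁻¹)
    rw [mul_one] at h0
    rw [one_div]
    apply h0.congr'
    filter_upwards [eventually_gt_atTop (0:ℝ)] with P hP
    rw [Real.rpow_one, mul_div_assoc, div_mul_eq_mul_div]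
  have hLO : Tendsto (fun P : ℝ =>
      Real.logb 2 (1 + c * P ^ ((M:ℝ)⁻¹)) / Real.logb 2 P) atTop (nhds (1/(M:ℝ))) := by
    rw [one_div]
    exact aux_tendsto hc (by positivity)
  refine tendsto_of_tendsto_of_tendsto_of_le_of_le' hLO hUP ?_ ?_
  · filter_upwards [eventually_gt_atTop (1:ℝ)] with P hP
    have hlogP : 0 < Real.logb 2 P := Real.logb_pos one_lt_two hP
    have := hlow P hP.le
    gcongr
  · filter_upwards [eventually_gt_atTop (1:ℝ)] with P hP
    have hlogP : 0 < Real.logb 2 P := Real.logb_pos one_lt_two hP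
    have := hsup_le P (by linarith)
    gcongr
end
end

section
/- Lemma 1 (minimum number of interfered groups): Suppose the generic rank assumption holds, G₁ ≤ … ≤ G_M, and N < N_{M_D*+1} where M_D* ∈ {1,…,M−1} satisfies N_{M_D*} ≤ N < N_{M_D*+1}. Then for every nonzero vector w ∈ ℂ^N: (a) the number of groups j ∈ {2,…,M} such that h_kᴴ w ≠ 0 for some user k ∈ 𝒢_j is at least M − M_D*; and (b) for every m ∈ {2,…,M}, the number of groups j ∈ {1,…,M}\{m} such that h_kᴴ w ≠ 0 for some user k ∈ 𝒢_j is at least M − M_D* − 1. -/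
open scoped BigOperators

noncomputable section

open Matrix in
open scoped ComplexOrder in
private lemma card_lt_of_orth {N K : ℕ} (h : Fin K → Fin N → ℂ) (hrank : GenericRank h)
    (w : Fin N → ℂ) (hw : w ≠ 0) (S : Finset (Fin K))
    (hS : ∀ k ∈ S, hinner (h k) w = 0) : S.card < N := by
  by_contra hle
  push_neg at hle
  set A : Matrix (Fin N) S ℂ := Matrix.of fun (i : Fin N) (k : S) => h k.1 i with hA
  have hrk : A.rank = N := by
    have := hrank S
    rwa [min_eq_left hle] at this
  have hrk2 : Aᴴ.rank = N := by rw [Matrix.rank_conjTranspose, hrk]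
  have hmem : w ∈ LinearMap.ker Aᴴ.mulVecLin := by
    rw [LinearMap.mem_ker, Matrix.mulVecLin_apply]
    funext k
    simpa [Matrix.mulVec, dotProduct, Matrix.conjTranspose_apply, hA, hinner]
      using hS k.1 k.2
  have hrn := LinearMap.finrank_range_add_finrank_ker (Matrix.mulVecLin Aᴴ)
  rw [Matrix.rank] at hrk2
  rw [hrk2, Module.finrank_fin_fun] at hrn
  have hker : LinearMap.ker Aᴴ.mulVecLin = ⊥ := by
    rw [← Submodule.finrank_eq_zero (R := ℂ)]
    omega
  rw [hker, Submodule.mem_bot] at hmem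
  exact hw hmem

private lemma sum_gsize_lt {N K M : ℕ} (h : Fin K → Fin N → ℂ) (μ : Fin K → Fin M)
    (hrank : GenericRank h) (w : Fin N → ℂ) (hw : w ≠ 0) (B : Finset ℕ)
    (hB : ∀ j ∈ B, ∀ k : Fin K, (μ k : ℕ) = j → hinner (h k) w = 0) :
    ∑ j ∈ B, Gsize μ j < N := by
  classical
  set U : Finset (Fin K) := Finset.univ.filter (fun k => (μ k : ℕ) ∈ B) with hU
  have hcard : U.card = ∑ j ∈ B, Gsize μ j := by
    rw [Finset.card_eq_sum_card_fiberwise (f := fun k => (μ k : ℕ)) (s := U) (t := B)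
      (fun k hk => (Finset.mem_filter.mp hk).2)]
    refine Finset.sum_congr rfl fun j hj => ?_
    unfold Gsize
    congr 1
    ext k
    simp only [hU, Finset.filter_filter, Finset.mem_filter, Finset.mem_univ, true_and]
    constructor
    · rintro ⟨_, h2⟩; exact h2
    · intro h2; exact ⟨h2 ▸ hj, h2⟩
  rw [← hcard]
  exact card_lt_of_orth h hrank w hw U
    (fun k hk => hB (μ k) (Finset.mem_filter.mp hk).2 k rfl)

private lemma mono_sum_aux (f : ℕ → ℕ) (hf : Monotone f) (c : ℕ) :
    ∀ n (B : Finset ℕ), B.card = n → (∀ j ∈ B, c ≤ j) →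
      ∑ i ∈ Finset.Ico c (c + n), f i ≤ ∑ j ∈ B, f j := by
  intro n
  induction n with
  | zero => intro B _ _; simp
  | succ n ih =>
    intro B hcard hc
    have hne : B.Nonempty := Finset.card_pos.mp (by omega)
    set b := B.max' hne with hbdef
    have hbB : b ∈ B := B.max'_mem hne
    have hb : c + n ≤ b := by
      have hsub : B ⊆ Finset.Icc c b := fun j hj =>
        Finset.mem_Icc.mpr ⟨hc j hj, Finset.le_max' B j hj⟩
      have := Finset.card_le_card hsub
      rw [Nat.card_Icc] at this
      omega
    have h1 := ih (B.erase b) (by rw [Finset.card_erase_of_mem hbB, hcard]; omega)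
      (fun j hj => hc j (Finset.mem_of_mem_erase hj))
    have h2 : f (c + n) ≤ f b := hf hb
    rw [show c + (n + 1) = (c + n) + 1 from rfl,
      Finset.sum_Ico_succ_top (Nat.le_add_right c n),
      ← Finset.insert_erase hbB, Finset.sum_insert (Finset.notMem_erase _ _)]
    omega

private lemma card_lt_threshold {N K M : ℕ} (h : Fin K → Fin N → ℂ) (μ : Fin K → Fin M)
    (hrank : GenericRank h)
    (hord : ∀ m m' : ℕ, m ≤ m' → m' < M → Gsize μ m ≤ Gsize μ m')
    (w : Fin N → ℂ) (hw : w ≠ 0) (hN : 0 < N) (hM : 0 < M)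
    (B : Finset ℕ) (c t : ℕ) (hct : c + t ≤ M)
    (hc : ∀ j ∈ B, c ≤ j ∧ j < M)
    (hB : ∀ j ∈ B, ∀ k : Fin K, (μ k : ℕ) = j → hinner (h k) w = 0)
    (hsum : N ≤ ∑ i ∈ Finset.Ico c (c + t), Gsize μ i) :
    B.card < t := by
  by_contra hge
  push_neg at hge
  obtain ⟨B', hB'sub, hB'card⟩ := Finset.exists_subset_card_eq hge
  set f : ℕ → ℕ := fun j => Gsize μ (min j (M - 1)) with hf
  have hmono : Monotone f := fun a b hab =>
    hord _ _ (min_le_min_right _ hab) (by omega)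
  have hkey := mono_sum_aux f hmono c B'.card B' rfl
    (fun j hj => (hc j (hB'sub hj)).1)
  rw [hB'card] at hkey
  have he1 : ∑ j ∈ B', f j = ∑ j ∈ B', Gsize μ j :=
    Finset.sum_congr rfl fun j hj => by
      have := (hc j (hB'sub hj)).2
      simp only [hf]
      rw [min_eq_left (by omega)]
  have he2 : ∑ i ∈ Finset.Ico c (c + t), f i = ∑ i ∈ Finset.Ico c (c + t), Gsize μ i :=
    Finset.sum_congr rfl fun i hi => by
      have := (Finset.mem_Ico.mp hi).2
      simp only [hf]
      rw [min_eq_left (by omega)]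
  rw [he1, he2] at hkey
  have hlt : ∑ j ∈ B', Gsize μ j < N :=
    sum_gsize_lt h μ hrank w hw B' (fun j hj => hB j (hB'sub hj))
  omega

/-- **Lemma 1 (minimum number of interfered groups).** Under the generic rank assumption,
with groups of nondecreasing sizes (groups indexed from `0`, so group `0` is the smallest,
matching `𝒢₁` of the paper) and `N_{M_D*} ≤ N < N_{M_D*+1}` for some `M_D* ∈ {1,…,M−1}`,
every nonzero beamforming vector `w` interferes with (i.e. `h_kᴴ w ≠ 0` for some user
`k` of) at least `M − M_D*` of the groups `2,…,M` (0-indexed: `1,…,M−1`), and, for every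
`m ∈ {2,…,M}`, with at least `M − M_D* − 1` of the groups in `{1,…,M}∖{m}`. -/
theorem stmt3 {N K M : ℕ} (h : Fin K → Fin N → ℂ) (μ : Fin K → Fin M)
    (hrank : GenericRank h)
    (hord : ∀ m m' : ℕ, m ≤ m' → m' < M → Gsize μ m ≤ Gsize μ m')
    (MD : ℕ) (hMD1 : 1 ≤ MD) (hMD2 : MD + 1 ≤ M)
    (hNlo : NL μ MD ≤ N) (hNhi : N < NL μ (MD + 1))
    (w : Fin N → ℂ) (hw : w ≠ 0) :
    (M - MD ≤
      {j : ℕ | 1 ≤ j ∧ j < M ∧ ∃ k : Fin K, (μ k : ℕ) = j ∧ hinner (h k) w ≠ 0}.ncard) ∧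
    (∀ m : ℕ, 1 ≤ m → m < M →
      M - MD - 1 ≤
        {j : ℕ | j < M ∧ j ≠ m ∧ ∃ k : Fin K, (μ k : ℕ) = j ∧ hinner (h k) w ≠ 0}.ncard) := by
  classical
  have hN : 0 < N := by
    rcases Nat.eq_zero_or_pos N with h0 | h0
    · subst h0
      exact absurd (funext fun i => i.elim0) hw
    · exact h0
  have hM : 0 < M := by omega
  have hsumN : N ≤ ∑ i ∈ Finset.Ico 1 (MD + 1), Gsize μ i := by
    have := hNhi; unfold NL at this; omega
  set P : ℕ → Prop := fun j => ∃ k : Fin K, (μ k : ℕ) = j ∧ hinner (h k) w ≠ 0 with hP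
  constructor
  · have hset : {j : ℕ | 1 ≤ j ∧ j < M ∧ P j} = ↑((Finset.Ico 1 M).filter P) := by
      ext j
      simp only [Set.mem_setOf_eq, Finset.coe_filter, Finset.mem_Ico]
      tauto
    rw [show {j : ℕ | 1 ≤ j ∧ j < M ∧ ∃ k : Fin K, (μ k : ℕ) = j ∧ hinner (h k) w ≠ 0}
        = {j : ℕ | 1 ≤ j ∧ j < M ∧ P j} from rfl, hset, Set.ncard_coe_finset]
    have hid := Finset.card_filter_add_card_filter_not (s := Finset.Ico 1 M) P
    have hlt : ((Finset.Ico 1 M).filter (fun j => ¬ P j)).card < MD := by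
      apply card_lt_threshold h μ hrank hord w hw hN hM _ 1 MD (by omega)
      · intro j hj
        have := Finset.mem_Ico.mp (Finset.mem_filter.mp hj).1
        exact ⟨this.1, this.2⟩
      · intro j hj k hk
        have hnp := (Finset.mem_filter.mp hj).2
        by_contra hne
        exact hnp ⟨k, hk, hne⟩
      · simpa [Nat.add_comm] using hsumN
    rw [Nat.card_Ico] at hid
    omega
  · intro m hm1 hmM
    set s : Finset ℕ := (Finset.range M).erase m with hs
    have hset : {j : ℕ | j < M ∧ j ≠ m ∧ P j} = ↑(s.filter P) := by
      ext j
      simp only [Set.mem_setOf_eq, Finset.coe_filter, hs, Finset.mem_erase, Finset.mem_range]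
      tauto
    rw [show {j : ℕ | j < M ∧ j ≠ m ∧ ∃ k : Fin K, (μ k : ℕ) = j ∧ hinner (h k) w ≠ 0}
        = {j : ℕ | j < M ∧ j ≠ m ∧ P j} from rfl, hset, Set.ncard_coe_finset]
    have hscard : s.card = M - 1 := by
      rw [hs, Finset.card_erase_of_mem (Finset.mem_range.mpr hmM), Finset.card_range]
    have hid := Finset.card_filter_add_card_filter_not (s := s) P
    have hlt : (s.filter (fun j => ¬ P j)).card < MD + 1 := by
      apply card_lt_threshold h μ hrank hord w hw hN hM _ 0 (MD + 1) (by omega)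
      · intro j hj
        have := (Finset.mem_filter.mp hj).1
        rw [hs, Finset.mem_erase, Finset.mem_range] at this
        exact ⟨Nat.zero_le _, this.2⟩
      · intro j hj k hk
        have hnp := (Finset.mem_filter.mp hj).2
        by_contra hne
        exact hnp ⟨k, hk, hne⟩
      · calc N ≤ ∑ i ∈ Finset.Ico 1 (MD + 1), Gsize μ i := hsumN
          _ ≤ ∑ i ∈ Finset.Ico 0 (0 + (MD + 1)), Gsize μ i := by
              apply Finset.sum_le_sum_of_subset
              apply Finset.Ico_subset_Ico (by omega) (by omega)
    rw [hscard] at hid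
    omega
end
end

section
/- Impossibility of interference-free service to more than M_D* groups: Suppose the generic rank assumption holds, G₁ ≤ … ≤ G_M, and N < N_{L+1} for some L ∈ {1,…,M−1}. Then for every subset S ⊆ {1,…,M} of groups with |S| = L+1, there exists m ∈ S such that the only vector w ∈ ℂ^N satisfying h_kᴴ w = 0 for every user k belonging to some group in S\{m} is w = 0. -/
open scoped BigOperators

noncomputable section

section Aux

open Matrix
open scoped ComplexOrder

/-- If at least `N` users' channels must be orthogonal to `w`, then `w = 0`
under the generic rank assumption. -/
lemma zero_of_rank_aux {N K : ℕ} (h : Fin K → Fin N → ℂ) (hrank : GenericRank h)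
    (U : Finset (Fin K)) (hU : N ≤ U.card) (w : Fin N → ℂ)
    (hw : ∀ k ∈ U, hinner (h k) w = 0) : w = 0 := by
  set A : Matrix (Fin N) U ℂ := Matrix.of fun i k => h k.1 i with hA
  have hr : A.rank = N := by
    have := hrank U
    rwa [min_eq_left hU] at this
  have hrc : A.conjTranspose.rank = N := by rw [Matrix.rank_conjTranspose, hr]
  have hker : w ∈ LinearMap.ker (A.conjTranspose.mulVecLin) := by
    rw [LinearMap.mem_ker]
    funext k
    have : (A.conjTranspose.mulVecLin w) k = hinner (h k.1) w := by
      simp [Matrix.mulVecLin_apply, Matrix.mulVec, Matrix.conjTranspose, dotProduct,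
        hinner, hA]
    rw [this, hw k.1 k.2]
    rfl
  have hrn := LinearMap.finrank_range_add_finrank_ker (A.conjTranspose.mulVecLin)
  have hdim : Module.finrank ℂ (Fin N → ℂ) = N := Module.finrank_fin_fun ℂ
  have hk0 : Module.finrank ℂ (LinearMap.ker (A.conjTranspose.mulVecLin)) = 0 := by
    have : Matrix.rank A.conjTranspose
        = Module.finrank ℂ (LinearMap.range (A.conjTranspose.mulVecLin)) := rfl
    omega
  have hbot : LinearMap.ker (A.conjTranspose.mulVecLin) = ⊥ :=
    Submodule.finrank_eq_zero.mp hk0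
  have := hbot ▸ hker
  simpa using this

/-- The number of users belonging to some group in `T`. -/
lemma card_users_aux {K M : ℕ} (μ : Fin K → Fin M) (T : Finset (Fin M)) :
    (Finset.univ.filter fun k => μ k ∈ T).card = ∑ m ∈ T, Gsize μ (m : ℕ) := by
  rw [Finset.card_eq_sum_card_fiberwise (f := μ) (s := Finset.univ.filter fun k => μ k ∈ T)
    (t := T) (fun x hx => by simpa using hx)]
  refine Finset.sum_congr rfl fun m hm => ?_
  unfold Gsize
  congr 1
  ext k
  simp only [Finset.mem_filter, Finset.mem_univ, true_and, Finset.filter_filter]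
  constructor
  · rintro ⟨-, rfl⟩; rfl
  · intro hk
    have hk' : μ k = m := Fin.val_inj.mp hk
    exact ⟨hk' ▸ hm, hk'⟩

/-- Any `L` groups with indices `≥ 1` have total size at least `Σ_{j=1}^{L} G_j`. -/
lemma sum_ge_aux {K M : ℕ} (μ : Fin K → Fin M)
    (hord : ∀ m m' : ℕ, m ≤ m' → m' < M → Gsize μ m ≤ Gsize μ m')
    (L : ℕ) (T : Finset (Fin M)) (hT : T.card = L)
    (hpos : ∀ t ∈ T, 1 ≤ (t : ℕ)) :
    ∑ j ∈ Finset.Ico 1 (L + 1), Gsize μ j ≤ ∑ t ∈ T, Gsize μ (t : ℕ) := by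
  classical
  let e := T.orderIsoOfFin hT
  have hmono : StrictMono fun i : Fin L => ((e i : Fin M) : ℕ) := by
    intro a b hab
    exact_mod_cast (T.orderIsoOfFin hT).strictMono hab
  have hlow : ∀ i : Fin L, (i : ℕ) + 1 ≤ ((e i : Fin M) : ℕ) := by
    intro i
    induction' hi : (i : ℕ) with n ih generalizing i
    · exact hpos _ (e i).2
    · obtain ⟨j, hj⟩ : ∃ j : Fin L, (j : ℕ) = n := ⟨⟨n, by omega⟩, rfl⟩
      have h1 := ih j hj
      have h2 : ((e j : Fin M) : ℕ) < ((e i : Fin M) : ℕ) := hmono (by omega)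
      omega
  have h1 : ∑ j ∈ Finset.Ico 1 (L + 1), Gsize μ j
      = ∑ i : Fin L, Gsize μ ((i : ℕ) + 1) := by
    rw [Finset.sum_Ico_eq_sum_range]
    simp only [Nat.add_sub_cancel]
    rw [Finset.sum_range fun i => Gsize μ (1 + i)]
    exact Finset.sum_congr rfl fun i _ => by rw [Nat.add_comm]
  have h2 : ∑ t ∈ T, Gsize μ (t : ℕ) = ∑ i : Fin L, Gsize μ ((e i : Fin M) : ℕ) := by
    rw [← Finset.sum_attach T fun t => Gsize μ (t : ℕ)]
    exact (Equiv.sum_comp e.toEquiv fun t => Gsize μ ((t : Fin M) : ℕ)).symm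
  rw [h1, h2]
  exact Finset.sum_le_sum fun i _ => hord _ _ (hlow i) (e i : Fin M).2

end Aux

/-- **Impossibility of interference-free service to more than `M_D*` groups.** Under the
generic rank assumption, with nondecreasing group sizes and `N < N_{L+1}` for some
`L ∈ {1,…,M−1}`, for every subset `S` of `L+1` groups there is a group `m ∈ S` whose
beam cannot be zero-forced to the other groups of `S`: the only `w ∈ ℂ^N` with
`h_kᴴ w = 0` for every user `k` of a group in `S ∖ {m}` is `w = 0`. -/
theorem stmt9 {N K M : ℕ} (h : Fin K → Fin N → ℂ) (μ : Fin K → Fin M)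
    (hrank : GenericRank h)
    (hord : ∀ m m' : ℕ, m ≤ m' → m' < M → Gsize μ m ≤ Gsize μ m')
    (L : ℕ) (hL1 : 1 ≤ L) (hL2 : L + 1 ≤ M) (hN : N < NL μ (L + 1))
    (S : Finset (Fin M)) (hS : S.card = L + 1) :
    ∃ m ∈ S, ∀ w : Fin N → ℂ,
      (∀ k : Fin K, μ k ∈ S.erase m → hinner (h k) w = 0) → w = 0 := by
  classical
  have hSne : S.Nonempty := Finset.card_pos.mp (by omega)
  set m := S.min' hSne with hm
  refine ⟨m, S.min'_mem hSne, ?_⟩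
  intro w hw
  set T := S.erase m with hTdef
  have hTcard : T.card = L := by
    rw [hTdef, Finset.card_erase_of_mem (S.min'_mem hSne), hS]; omega
  have hpos : ∀ t ∈ T, 1 ≤ (t : ℕ) := by
    intro t ht
    have h1 : t ≠ m := (Finset.mem_erase.mp ht).1
    have h2 : m ≤ t := S.min'_le t (Finset.mem_of_mem_erase ht)
    have : m < t := lt_of_le_of_ne h2 (Ne.symm h1)
    have := Fin.lt_iff_val_lt_val.mp this
    omega
  have hNle : N ≤ ∑ j ∈ Finset.Ico 1 (L + 1), Gsize μ j := by
    have : NL μ (L + 1) = 1 + ∑ j ∈ Finset.Ico 1 (L + 1), Gsize μ j := rfl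
    omega
  set U : Finset (Fin K) := Finset.univ.filter fun k => μ k ∈ T with hUdef
  have hUcard : N ≤ U.card := by
    rw [hUdef, card_users_aux μ T]
    exact le_trans hNle (sum_ge_aux μ hord L T hTcard hpos)
  exact zero_of_rank_aux h hrank U hUcard w
    (fun k hk => hw k (Finset.mem_filter.mp hk).2)
end
end
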